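/- arXiv:2304.11971 — 2 statements merged into one kernel-verified Lean document; each statement's English description precedes it below -/
import Mathlib

section
/- Let G be a finite graph on n vertices and t ≤ n/3. If every connected component of G has at most n−t vertices, then there exists a set X ⊆ V with t ≤ |X| ≤ n/2 such that no edge of G connects X to V∖X (i.e., X is a union of connected components). -/
open Finset
open scoped Classical

theorem stmt_2 {V : Type*} [Fintype V] [DecidableEq V] (G : SimpleGraph V)
    [DecidableRel G.Adj] (n t : ℕ) (hn : Fintype.card V = n)
    (ht : 1 ≤ t) (ht3 : 3 * t ≤ n)
    (hcomp : ∀ v : V,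
      (Finset.univ.filter (fun u => G.Reachable v u)).card ≤ n - t) :
    ∃ X : Finset V, t ≤ X.card ∧ 2 * X.card ≤ n ∧
      ∀ u ∈ X, ∀ v, v ∉ X → ¬ G.Adj u v := by
  classical
  set P : Finset V → Prop := fun X =>
    (∀ u ∈ X, ∀ v, G.Reachable u v → v ∈ X) ∧ t ≤ X.card with hP
  have hPuniv : P (univ : Finset V) := by
    refine ⟨fun u _ v _ => mem_univ v, ?_⟩
    rw [card_univ, hn]; omega
  obtain ⟨X, hX, hmin⟩ := Finset.exists_min_image
      ((univ : Finset (Finset V)).filter P) Finset.card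
      ⟨univ, by simpa using hPuniv⟩
  rw [mem_filter] at hX
  obtain ⟨-, hXcl, hXt⟩ := hX
  have hedge : ∀ (A : Finset V), (∀ u ∈ A, ∀ v, G.Reachable u v → v ∈ A) →
      ∀ u ∈ A, ∀ v, v ∉ A → ¬ G.Adj u v := by
    intro A hA u hu v hv hadj
    exact hv (hA u hu v hadj.reachable)
  have hXn : X.card ≤ n := by
    rw [← hn, ← card_univ]; exact card_le_card (subset_univ X)
  by_cases h2 : 2 * X.card ≤ n
  · exact ⟨X, hXt, h2, hedge X hXcl⟩
  · have hXne : X.Nonempty := card_pos.mp (by omega)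
    obtain ⟨v, hv⟩ := hXne
    set C : Finset V := univ.filter (fun u => G.Reachable v u) with hC
    have hCX : C ⊆ X := by
      intro u hu
      rw [hC, mem_filter] at hu
      exact hXcl v hv u hu.2
    have hCv : v ∈ C := by simp [hC, SimpleGraph.Reachable.refl]
    have hCcard : C.card ≤ n - t := hcomp v
    set Y : Finset V := X \ C with hY
    have hvY : v ∉ Y := by
      rw [hY, mem_sdiff]; exact fun h => h.2 hCv
    have hYcl : ∀ u ∈ Y, ∀ w, G.Reachable u w → w ∈ Y := by
      intro u hu w hr
      rw [hY, mem_sdiff] at hu ⊢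
      refine ⟨hXcl u hu.1 w hr, fun hwC => hu.2 ?_⟩
      rw [hC, mem_filter] at hwC ⊢
      exact ⟨mem_univ u, hwC.2.trans hr.symm⟩
    have hYltX : Y.card < X.card := by
      refine Finset.card_lt_card ?_
      exact (Finset.ssubset_iff_of_subset Finset.sdiff_subset).2 ⟨v, hv, hvY⟩
    have hYlt : Y.card < t := by
      by_contra hge
      push_neg at hge
      have hYmem : Y ∈ (univ : Finset (Finset V)).filter P := by
        rw [mem_filter]; exact ⟨mem_univ Y, hYcl, hge⟩
      have := hmin Y hYmem
      omega
    have hXYC : X.card ≤ Y.card + C.card := by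
      have hsub : X ⊆ Y ∪ C := by
        intro u hu
        rw [mem_union, hY, mem_sdiff]
        by_cases huC : u ∈ C
        · exact Or.inr huC
        · exact Or.inl ⟨hu, huC⟩
      calc X.card ≤ (Y ∪ C).card := card_le_card hsub
        _ ≤ Y.card + C.card := card_union_le Y C
    have hXnt : X.card ≤ n - t := by
      by_cases hCt : t ≤ C.card
      · have hCcl : ∀ u ∈ C, ∀ w, G.Reachable u w → w ∈ C := by
          intro u hu w hr
          rw [hC, mem_filter] at hu ⊢
          exact ⟨mem_univ w, hu.2.trans hr⟩
        have hCmem : C ∈ (univ : Finset (Finset V)).filter P := by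
          rw [mem_filter]; exact ⟨mem_univ C, hCcl, hCt⟩
        have := hmin C hCmem
        omega
      · omega
    refine ⟨Xᶜ, ?_, ?_, hedge Xᶜ ?_⟩
    · have : Xᶜ.card = n - X.card := by rw [Finset.card_compl, hn]
      omega
    · have : Xᶜ.card = n - X.card := by rw [Finset.card_compl, hn]
      omega
    · intro u hu w hr
      rw [mem_compl] at hu ⊢
      exact fun hwX => hu (hXcl w hwX u hr.symm)
end

section
/- Let H be a graph with N = 2m+1 vertices such that for every subset X ⊆ V(H) with |X| = m, the number of edges between X and V(H)∖X is at least a·m (for a real a > 0). Then the number of edges of H is at least a·(2m+1)·m/(m+1), and hence the average degree of H is at least 2a·m/(m+1) = 2a·(N−1)/(N+1). -/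
open Finset

lemma count_aux {V : Type*} [Fintype V] [DecidableEq V] (m : ℕ) (hm : 1 ≤ m)
    (hcard : Fintype.card V = 2 * m + 1) (u v : V) (huv : u ≠ v) :
    (((univ : Finset V).powersetCard m).filter (fun X => u ∈ X ∧ v ∉ X)).card
      = (2 * m - 1).choose (m - 1) := by
  have key : (((univ : Finset V).powersetCard m).filter (fun X => u ∈ X ∧ v ∉ X)).card
      = (((univ.erase v).erase u).powersetCard (m - 1)).card := by
    apply Finset.card_nbij' (fun X => X.erase u) (fun Y => insert u Y)
    · intro X hX
      simp only [mem_coe, mem_filter, mem_powersetCard] at hX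
      obtain ⟨⟨-, hXm⟩, huX, hvX⟩ := hX
      rw [mem_coe, mem_powersetCard]
      constructor
      · intro x hx
        simp only [mem_erase] at hx ⊢
        refine ⟨hx.1, ?_, mem_univ x⟩
        rintro rfl; exact hvX hx.2
      · rw [card_erase_of_mem huX, hXm]
    · intro Y hY
      rw [mem_coe, mem_powersetCard] at hY
      obtain ⟨hYs, hYc⟩ := hY
      have huY : u ∉ Y := fun h => (mem_erase.mp (hYs h)).1 rfl
      simp only [mem_coe, mem_filter, mem_powersetCard]
      refine ⟨⟨subset_univ _, ?_⟩, mem_insert_self _ _, ?_⟩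
      · rw [card_insert_of_notMem huY, hYc]; omega
      · simp only [mem_insert]
        rintro (rfl | h)
        · exact huv rfl
        · exact (mem_erase.mp (mem_erase.mp (hYs h)).2).1 rfl
    · intro X hX
      simp only [mem_coe, mem_filter] at hX
      exact insert_erase hX.2.1
    · intro Y hY
      rw [mem_coe, mem_powersetCard] at hY
      have huY : u ∉ Y := fun h => (mem_erase.mp (hY.1 h)).1 rfl
      exact erase_insert huY
  have hu : u ∈ univ.erase v := mem_erase.mpr ⟨huv, mem_univ u⟩
  rw [key, card_powersetCard, card_erase_of_mem hu, card_erase_of_mem (mem_univ v),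
    card_univ, hcard, show 2 * m + 1 - 1 - 1 = 2 * m - 1 from by omega]

lemma choose_id (m : ℕ) (hm : 1 ≤ m) :
    (m + 1) * (2 * m + 1).choose m = 2 * (2 * m + 1) * (2 * m - 1).choose (m - 1) := by
  obtain ⟨k, rfl⟩ : ∃ k, m = k + 1 := ⟨m - 1, by omega⟩
  rw [show 2 * (k + 1) + 1 = (2 * k + 2) + 1 by ring, show 2 * (k + 1) - 1 = 2 * k + 1 by omega,
    show k + 1 - 1 = k by omega]
  have h1 : (2 * k + 2 + 1).choose (k + 1) = (2 * k + 2 + 1).choose (k + 2) := by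
    have := Nat.choose_symm (show k + 2 ≤ 2 * k + 2 + 1 by omega)
    rw [show 2 * k + 2 + 1 - (k + 2) = k + 1 by omega] at this
    exact this
  have h2 : (2 * k + 2 + 1) * (2 * k + 2).choose (k + 1)
      = (2 * k + 2 + 1).choose (k + 2) * (k + 2) := by
    exact_mod_cast Nat.add_one_mul_choose_eq (2 * k + 2) (k + 1)
  have h3 : (2 * k + 2).choose (k + 1) = 2 * (2 * k + 1).choose k := by
    rw [show 2 * k + 2 = (2 * k + 1) + 1 by ring, Nat.choose_succ_succ]
    have h4 : (2 * k + 1).choose (k + 1) = (2 * k + 1).choose k := by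
      have := Nat.choose_symm (show k + 1 ≤ 2 * k + 1 by omega)
      rw [show 2 * k + 1 - (k + 1) = k by omega] at this
      exact this.symm
    simp only [Nat.succ_eq_add_one]
    omega
  calc (k + 1 + 1) * (2 * k + 2 + 1).choose (k + 1)
      = (2 * k + 2 + 1).choose (k + 2) * (k + 2) := by rw [h1]; ring
    _ = (2 * k + 2 + 1) * (2 * k + 2).choose (k + 1) := h2.symm
    _ = 2 * (2 * k + 2 + 1) * (2 * k + 1).choose k := by rw [h3]; ring

theorem stmt_3 {V : Type*} [Fintype V] [DecidableEq V] (H : SimpleGraph V)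
    [DecidableRel H.Adj] (m : ℕ) (hm : 1 ≤ m) (hcard : Fintype.card V = 2 * m + 1)
    (a : ℝ) (ha : 0 < a)
    (hexp : ∀ X : Finset V, X.card = m →
      a * m ≤ (∑ u ∈ X, ∑ v ∈ Xᶜ, if H.Adj u v then (1:ℝ) else 0)) :
    a * (2 * m + 1) * m / (m + 1) ≤ (H.edgeFinset.card : ℝ) ∧
    2 * a * m / (m + 1) ≤ (∑ v : V, (H.degree v : ℝ)) / (2 * m + 1) := by
  set g : V → V → ℝ := fun u v => if H.Adj u v then (1:ℝ) else 0 with hg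
  set S := (univ : Finset V).powersetCard m with hS
  set C1 := (2 * m + 1).choose m with hC1
  set C2 := (2 * m - 1).choose (m - 1) with hC2
  -- degree sum
  have hdeg : ∀ u : V, (∑ v : V, g u v) = (H.degree u : ℝ) := by
    intro u
    rw [hg]
    simp only
    rw [Finset.sum_boole]
    congr 1
    rw [SimpleGraph.degree, ← SimpleGraph.neighborFinset_eq_filter]
  -- each X-term rewrite
  have step1 : ∀ X ∈ S, (∑ u ∈ X, ∑ v ∈ Xᶜ, g u v)
      = ∑ u : V, ∑ v : V, (if u ∈ X ∧ v ∉ X then g u v else 0) := by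
    intro X _
    have h1 : ∀ u : V, (∑ v ∈ Xᶜ, g u v) = ∑ v : V, if v ∉ X then g u v else 0 := by
      intro u
      simp only [← Finset.mem_compl]
      rw [Finset.sum_ite_mem, univ_inter]
    calc ∑ u ∈ X, ∑ v ∈ Xᶜ, g u v
        = ∑ u : V, if u ∈ X then ∑ v ∈ Xᶜ, g u v else 0 := by
          rw [Finset.sum_ite_mem, univ_inter]
      _ = ∑ u : V, ∑ v : V, (if u ∈ X ∧ v ∉ X then g u v else 0) := by
          refine Finset.sum_congr rfl fun u _ => ?_
          by_cases hu : u ∈ X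
          · simp only [hu, if_true, true_and, h1 u]
          · simp [hu]
  -- total sum
  have hmain : (C1 : ℝ) * (a * m) ≤ (C2 : ℝ) * (2 * H.edgeFinset.card) := by
    have lower : (C1 : ℝ) * (a * m) ≤ ∑ X ∈ S, ∑ u ∈ X, ∑ v ∈ Xᶜ, g u v := by
      have : ∀ X ∈ S, a * m ≤ ∑ u ∈ X, ∑ v ∈ Xᶜ, g u v := by
        intro X hX
        rw [hS, mem_powersetCard] at hX
        exact hexp X hX.2
      calc (C1 : ℝ) * (a * m) = ∑ _X ∈ S, a * m := by
            rw [Finset.sum_const, nsmul_eq_mul, hS, card_powersetCard, card_univ, hcard]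
        _ ≤ _ := Finset.sum_le_sum this
    have upper : (∑ X ∈ S, ∑ u ∈ X, ∑ v ∈ Xᶜ, g u v)
        = (C2 : ℝ) * (2 * H.edgeFinset.card) := by
      rw [Finset.sum_congr rfl step1, Finset.sum_comm]
      rw [show (∑ u : V, ∑ X ∈ S, ∑ v : V, if u ∈ X ∧ v ∉ X then g u v else 0)
          = ∑ u : V, ∑ v : V, ∑ X ∈ S, (if u ∈ X ∧ v ∉ X then g u v else 0) by
        exact Finset.sum_congr rfl (fun u _ => Finset.sum_comm)]
      have inner : ∀ u v : V,
          (∑ X ∈ S, (if u ∈ X ∧ v ∉ X then g u v else 0)) = (C2 : ℝ) * g u v := by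
        intro u v
        by_cases hadj : H.Adj u v
        · have hg1 : g u v = (1:ℝ) := if_pos hadj
          rw [hg1, mul_one, Finset.sum_boole, count_aux m hm hcard u v hadj.ne]
        · have : g u v = 0 := by simp [hg, hadj]
          simp [this]
      rw [show (∑ u : V, ∑ v : V, ∑ X ∈ S, (if u ∈ X ∧ v ∉ X then g u v else 0))
          = ∑ u : V, ∑ v : V, (C2 : ℝ) * g u v by
        exact Finset.sum_congr rfl fun u _ => Finset.sum_congr rfl fun v _ => inner u v]
      simp_rw [← Finset.mul_sum]
      rw [Finset.sum_congr rfl (fun u _ => hdeg u)]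
      have : (∑ u : V, (H.degree u : ℝ)) = 2 * H.edgeFinset.card := by
        exact_mod_cast congrArg (Nat.cast : ℕ → ℝ) (H.sum_degrees_eq_twice_card_edges)
      rw [this]
    linarith [lower, upper ▸ lower]
  -- binomial identity in ℝ
  have hid : ((m : ℝ) + 1) * C1 = 2 * (2 * m + 1) * C2 := by
    exact_mod_cast congrArg (Nat.cast : ℕ → ℝ) (choose_id m hm)
  have hC2pos : (0 : ℝ) < C2 := by
    have : 0 < C2 := Nat.choose_pos (by omega)
    exact_mod_cast this
  have hm1 : (0 : ℝ) < (m : ℝ) + 1 := by positivity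
  have key : a * (2 * m + 1) * m ≤ (H.edgeFinset.card : ℝ) * (m + 1) := by
    have h := mul_le_mul_of_nonneg_left hmain (le_of_lt hm1)
    have h2 : (2 * (C2 : ℝ)) * (a * (2 * m + 1) * m)
        ≤ (2 * (C2 : ℝ)) * ((H.edgeFinset.card : ℝ) * (m + 1)) := by
      calc (2 * (C2 : ℝ)) * (a * (2 * m + 1) * m)
          = (((m : ℝ) + 1) * C1) * (a * m) := by rw [hid]; ring
        _ = ((m : ℝ) + 1) * ((C1 : ℝ) * (a * m)) := by ring
        _ ≤ ((m : ℝ) + 1) * ((C2 : ℝ) * (2 * H.edgeFinset.card)) := h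
        _ = (2 * (C2 : ℝ)) * ((H.edgeFinset.card : ℝ) * (m + 1)) := by ring
    exact le_of_mul_le_mul_left h2 (by positivity)
  constructor
  · rw [div_le_iff₀ hm1]
    linarith
  · rw [show (∑ v : V, (H.degree v : ℝ)) = 2 * H.edgeFinset.card by
      exact_mod_cast congrArg (Nat.cast : ℕ → ℝ) (H.sum_degrees_eq_twice_card_edges)]
    rw [div_le_div_iff₀ hm1 (by positivity)]
    linarith [key]
end
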